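/- arXiv:2305.07098 — 3 statements merged into one kernel-verified Lean document; each statement's English description precedes it below -/
import Mathlib

section
/- Let n ≥ 1 and w ∈ ℤ. Let x' ∈ {0,1}^n with x'_1 = 1. Then for every y ∈ {0,1}^n one has f_w(1^n, y) ≤ f_w(x', 1^n), with equality if and only if y = 1^n. Consequently, once the time-linkage RLS or (1+1) EA on f_w is in a state (x',1^n) with x'_1 = 1, every accepted offspring equals 1^n, all later states are of the form (z,1^n) with z_1 = 1, and hence for w < 0 the algorithm never reaches the global optimum afterwards. -/
open scoped Classical BigOperators ENNReal

noncomputable section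

/-- Bitstrings of length `n`. -/
abbrev BitStr (n : ℕ) := Fin n → Bool

/-- The number of one-bits of a bitstring. -/
def ones {n : ℕ} (x : BitStr n) : ℕ := (Finset.univ.filter fun i => x i = true).card

/-- The number of zero-bits of a bitstring. -/
def zeros {n : ℕ} (x : BitStr n) : ℕ := (Finset.univ.filter fun i => x i = false).card

/-- The first bit of a bitstring (`false` if `n = 0`). -/
def firstBit {n : ℕ} (x : BitStr n) : Bool := if h : 0 < n then x ⟨0, h⟩ else false

/-- The number of one-bits among the last `n-1` positions. -/
def onesTail {n : ℕ} (x : BitStr n) : ℕ :=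
  (Finset.univ.filter fun i : Fin n => x i = true ∧ (i : ℕ) ≠ 0).card

/-- The all-ones bitstring `1^n`. -/
def allOnes (n : ℕ) : BitStr n := fun _ => true

/-- The time-linkage OneMax function `f_w(x, y) = |y| + w·x₁`, where `x` is the
previous solution and `y` is the current one. -/
def fW {n : ℕ} (w : ℤ) (x y : BitStr n) : ℤ :=
  (ones y : ℤ) + (if firstBit x then w else 0)

/-- States of the time-linkage algorithms: (previous solution, current solution). -/
abbrev TLState (n : ℕ) := BitStr n × BitStr n

/-- Hamming distance between two bitstrings. -/
def hamming {n : ℕ} (x y : BitStr n) : ℕ := (Finset.univ.filter fun i => x i ≠ y i).card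

/-- Standard bit-wise mutation, flipping each bit independently with probability `1/n`:
`mutEA x y` is the probability that mutating `x` yields `y`. -/
def mutEA {n : ℕ} (x y : BitStr n) : ℝ :=
  (1 / n : ℝ) ^ hamming x y * (1 - 1 / n) ^ (n - hamming x y)

/-- RLS mutation, flipping exactly one bit chosen uniformly at random:
`mutRLS x y` is the probability that mutating `x` yields `y`. -/
def mutRLS {n : ℕ} (x y : BitStr n) : ℝ :=
  if hamming x y = 1 then (1 / n : ℝ) else 0

/-- Transition matrix of the time-linkage (1+1)-type algorithm with mutation
distribution `m` on `f_w`: at state `(x', x)`, an offspring `y` sampled from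
`m x ·` is accepted (the state moving to `(x, y)`) iff `f_w(x, y) ≥ f_w(x', x)`;
otherwise the state stays at `(x', x)`. -/
def tlTrans {n : ℕ} (m : BitStr n → BitStr n → ℝ) (w : ℤ) (s t : TLState n) : ℝ :=
  (∑ y : BitStr n, if fW w s.1 s.2 ≤ fW w s.2 y ∧ t = (s.2, y) then m s.2 y else 0) +
    if t = s then ∑ y : BitStr n, if ¬ fW w s.1 s.2 ≤ fW w s.2 y then m s.2 y else 0 else 0

/-- Transition matrix of the time-linkage (1+1) EA on `f_w`. -/
def transEA {n : ℕ} (w : ℤ) : TLState n → TLState n → ℝ := tlTrans mutEA w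

/-- Transition matrix of the time-linkage RLS on `f_w`. -/
def transRLS {n : ℕ} (w : ℤ) : TLState n → TLState n → ℝ := tlTrans mutRLS w

/-- Probability that the chain with transition matrix `P` started at `s`
visits a state in `E` within the first `T` steps (including time 0). -/
def hitWithin {n : ℕ} (P : TLState n → TLState n → ℝ) (E : TLState n → Prop) :
    ℕ → TLState n → ℝ
  | 0, s => if E s then 1 else 0
  | T + 1, s => if E s then 1 else ∑ t : TLState n, P s t * hitWithin P E T t

/-- Probability that the chain started at `s` ever visits a state in `E`. -/
def hitProb {n : ℕ} (P : TLState n → TLState n → ℝ) (E : TLState n → Prop)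
    (s : TLState n) : ℝ := ⨆ T : ℕ, hitWithin P E T s

/-- Probability that the chain started at `s` visits a state in `E` at some
time `≥ 1` (i.e. at a strictly later time). -/
def hitProbLater {n : ℕ} (P : TLState n → TLState n → ℝ) (E : TLState n → Prop)
    (s : TLState n) : ℝ := ⨆ T : ℕ, ∑ t : TLState n, P s t * hitWithin P E T t

/-- Probability that the chain started at `s` visits `A` within `T` steps
without having visited `B` strictly before (`A` has priority on common states). -/
def raceWithin {n : ℕ} (P : TLState n → TLState n → ℝ) (A B : TLState n → Prop) :
    ℕ → TLState n → ℝ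
  | 0, s => if A s then 1 else 0
  | T + 1, s =>
      if A s then 1 else if B s then 0 else ∑ t : TLState n, P s t * raceWithin P A B T t

/-- Probability that the chain started at `s` eventually visits `A` before `B`,
i.e. reaches `A` without having visited `B` strictly before. -/
def raceProb {n : ℕ} (P : TLState n → TLState n → ℝ) (A B : TLState n → Prop)
    (s : TLState n) : ℝ := ⨆ T : ℕ, raceWithin P A B T s

/-- Probability that the chain started at `s` enters the set `A` within `T`
steps and at the first entrance time is in `E`. -/
def firstHitInWithin {n : ℕ} (P : TLState n → TLState n → ℝ) (A E : TLState n → Prop) :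
    ℕ → TLState n → ℝ
  | 0, s => if A s then (if E s then 1 else 0) else 0
  | T + 1, s =>
      if A s then (if E s then 1 else 0)
      else ∑ t : TLState n, P s t * firstHitInWithin P A E T t

/-- Probability that the chain started at `s` eventually enters the set `A`
and at the first entrance time is in `E`. -/
def firstHitInProb {n : ℕ} (P : TLState n → TLState n → ℝ) (A E : TLState n → Prop)
    (s : TLState n) : ℝ := ⨆ T : ℕ, firstHitInWithin P A E T s

/-- Expected hitting time of `E` for the chain started at `s` (in `ℝ≥0∞`),
via `E[τ] = ∑_{T ≥ 0} P[τ > T]`. -/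
def expHitTime {n : ℕ} (P : TLState n → TLState n → ℝ) (E : TLState n → Prop)
    (s : TLState n) : ℝ≥0∞ := ∑' T : ℕ, ENNReal.ofReal (1 - hitWithin P E T s)

/-- Probability that the chain started at `s` never visits a state in `B`. -/
def avoidProb {n : ℕ} (P : TLState n → TLState n → ℝ) (B : TLState n → Prop)
    (s : TLState n) : ℝ := 1 - hitProb P B s

/-- `E[τ_E · 1_{B is never visited}]` for the chain started at `s` (in `ℝ≥0∞`),
using `P[τ_E > T and B never visited] = P[B never visited] − P[E hit within T
steps, avoiding B]`, which is valid whenever `B` cannot be visited anymore once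
`E` has been reached. -/
def expHitTimeAvoid {n : ℕ} (P : TLState n → TLState n → ℝ) (E B : TLState n → Prop)
    (s : TLState n) : ℝ≥0∞ :=
  ∑' T : ℕ, ENNReal.ofReal (avoidProb P B s - raceWithin P E B T s)

/-- The global optimum for negative weight `w < 0`: the current solution is
`1^n` and the stored previous first bit is `0`. -/
def OptNeg {n : ℕ} (s : TLState n) : Prop := s.2 = allOnes n ∧ firstBit s.1 = false

/-- The global optimum for positive weight `w > 0`: the current solution is
`1^n` and the stored previous first bit is `1`. -/
def OptPos {n : ℕ} (s : TLState n) : Prop := s.2 = allOnes n ∧ firstBit s.1 = true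

/-- Event I for the (1+1) EA (for `w < -1`): first bit pattern `(0,1)`,
current solution not `1^n`, and `|x_{[2..n]}| ≥ w + n`. -/
def EventIEA {n : ℕ} (w : ℤ) (s : TLState n) : Prop :=
  firstBit s.1 = false ∧ firstBit s.2 = true ∧ s.2 ≠ allOnes n ∧
    w + n ≤ (onesTail s.2 : ℤ)

/-- Event I for the RLS (for `w < -1`): first bit pattern `(0,1)` and the
current solution is not `1^n`. -/
def EventIRLS {n : ℕ} (s : TLState n) : Prop :=
  firstBit s.1 = false ∧ firstBit s.2 = true ∧ s.2 ≠ allOnes n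

/-- Event II: the current solution is `1^n` and the stored first bit is `1`. -/
def EventII {n : ℕ} (s : TLState n) : Prop :=
  firstBit s.1 = true ∧ s.2 = allOnes n

/-- Event III for the (1+1) EA (for `w > 0`): first bit pattern `(1,0)` and
`|x_{[2..n]}| ≥ n - w + 1`. -/
def EventIIIEA {n : ℕ} (w : ℤ) (s : TLState n) : Prop :=
  firstBit s.1 = true ∧ firstBit s.2 = false ∧ (n : ℤ) - w + 1 ≤ (onesTail s.2 : ℤ)

/-- Event III for the RLS (for `w > 1`): first bit pattern `(1,0)`. -/
def EventIIIRLS {n : ℕ} (s : TLState n) : Prop :=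
  firstBit s.1 = true ∧ firstBit s.2 = false

/-- Euler's number `e`. -/
def eu : ℝ := Real.exp 1

end

lemma ones_le' {n : ℕ} (x : BitStr n) : ones x ≤ n := by
  classical
  have h : (Finset.univ.filter fun i => x i = true).card ≤ (Finset.univ : Finset (Fin n)).card :=
    Finset.card_le_card (Finset.filter_subset _ _)
  simpa [ones] using h

lemma ones_allOnes' (n : ℕ) : ones (allOnes n) = n := by
  simp [ones, allOnes]

lemma eq_allOnes_of_ones' {n : ℕ} {x : BitStr n} (h : n ≤ ones x) : x = allOnes n := by
  classical
  have hcard : (Finset.univ.filter fun i => x i = true).card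
      = (Finset.univ : Finset (Fin n)).card := by
    have := le_antisymm (ones_le' x) h
    simp only [ones] at this
    simp [this]
  have huniv := Finset.eq_univ_of_card _ hcard
  funext i
  have hi : i ∈ Finset.univ.filter fun i => x i = true :=
    Finset.eq_univ_iff_forall.mp huniv i
  simpa [allOnes] using (Finset.mem_filter.mp hi).2

lemma firstBit_allOnes' {n : ℕ} (hn : 1 ≤ n) : firstBit (allOnes n) = true := by
  have h : 0 < n := hn
  simp [firstBit, allOnes, h]

/-- The closed set is preserved by one step of any time-linkage algorithm. -/
lemma closed_step {n : ℕ} (hn : 1 ≤ n) (m : BitStr n → BitStr n → ℝ) (w : ℤ)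
    (s t : TLState n) (hs2 : s.2 = allOnes n) (hs1 : firstBit s.1 = true)
    (hP : tlTrans m w s t ≠ 0) : t.2 = allOnes n ∧ firstBit t.1 = true := by
  classical
  unfold tlTrans at hP
  by_cases h1 : (∑ y : BitStr n,
      if fW w s.1 s.2 ≤ fW w s.2 y ∧ t = (s.2, y) then m s.2 y else 0) = 0
  · have h2 : (if t = s then
        ∑ y : BitStr n, if ¬ fW w s.1 s.2 ≤ fW w s.2 y then m s.2 y else 0 else 0) ≠ 0 :=
      fun hc => hP (by rw [h1, hc, add_zero])
    have ht : t = s := by by_contra hc; simp [hc] at h2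
    subst ht; exact ⟨hs2, hs1⟩
  · obtain ⟨y, -, hy⟩ := Finset.exists_ne_zero_of_sum_ne_zero h1
    have hcond : fW w s.1 s.2 ≤ fW w s.2 y ∧ t = (s.2, y) := by
      by_contra hc; simp [hc] at hy
    obtain ⟨hle, ht⟩ := hcond
    have hfle : (n : ℤ) ≤ (ones y : ℤ) := by
      rw [hs2] at hle
      simp only [fW, hs1, firstBit_allOnes' hn, ones_allOnes', if_true] at hle
      linarith
    have hy1 : y = allOnes n := eq_allOnes_of_ones' (by exact_mod_cast hfle)
    subst ht
    exact ⟨by simpa using hy1, by simpa [hs2] using firstBit_allOnes' hn⟩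

lemma hitWithin_eq_zero {n : ℕ} (P : TLState n → TLState n → ℝ)
    (C E : TLState n → Prop)
    (hstep : ∀ s t, C s → P s t ≠ 0 → C t)
    (hE : ∀ s, C s → ¬ E s) :
    ∀ T s, C s → hitWithin P E T s = 0 := by
  classical
  intro T
  induction T with
  | zero => intro s hs; simp [hitWithin, hE s hs]
  | succ T ih =>
      intro s hs
      rw [hitWithin, if_neg (hE s hs)]
      refine Finset.sum_eq_zero fun t _ => ?_
      by_cases hPt : P s t = 0
      · simp [hPt]
      · simp [ih t (hstep s t hs hPt)]

/-- For any `w ∈ ℤ` and any `x'` with `x'_1 = 1`, every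
offspring `y` satisfies `f_w(1^n, y) ≤ f_w(x', 1^n)`, with equality iff
`y = 1^n`. Consequently, from any state `(x', 1^n)` with `x'_1 = 1` every
accepted offspring equals `1^n`, the set of states `(z, 1^n)` with `z_1 = 1`
is closed under the transitions of both the time-linkage RLS and (1+1) EA,
and for `w < 0` neither algorithm ever reaches the global optimum afterwards. -/
theorem stmt2 (n : ℕ) (hn : 1 ≤ n) (w : ℤ) (x' : BitStr n)
    (hx' : firstBit x' = true) :
    (∀ y : BitStr n, fW w (allOnes n) y ≤ fW w x' (allOnes n) ∧
      (fW w (allOnes n) y = fW w x' (allOnes n) ↔ y = allOnes n)) ∧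
    (∀ y : BitStr n, fW w x' (allOnes n) ≤ fW w (allOnes n) y → y = allOnes n) ∧
    (∀ P ∈ ({transEA (n := n) w, transRLS (n := n) w} :
        Set (TLState n → TLState n → ℝ)),
      ∀ s : TLState n, s.2 = allOnes n → firstBit s.1 = true →
        ∀ t : TLState n, P s t ≠ 0 → t.2 = allOnes n ∧ firstBit t.1 = true) ∧
    (w < 0 →
      hitProb (transEA w) (OptNeg (n := n)) (x', allOnes n) = 0 ∧
      hitProb (transRLS w) (OptNeg (n := n)) (x', allOnes n) = 0) := by
  classical
  have hfA : firstBit (allOnes n) = true := firstBit_allOnes' hn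
  have hfx : fW w x' (allOnes n) = (n : ℤ) + w := by
    simp [fW, hx', ones_allOnes']
  have hfy : ∀ y : BitStr n, fW w (allOnes n) y = (ones y : ℤ) + w := by
    intro y; simp [fW, hfA]
  have key : ∀ y : BitStr n, fW w (allOnes n) y ≤ fW w x' (allOnes n) ∧
      (fW w (allOnes n) y = fW w x' (allOnes n) ↔ y = allOnes n) := by
    intro y
    rw [hfx, hfy]
    constructor
    · have := ones_le' y; omega
    · constructor
      · intro h
        exact eq_allOnes_of_ones' (by omega)
      · intro h; subst h; rw [ones_allOnes']
  have key2 : ∀ y : BitStr n, fW w x' (allOnes n) ≤ fW w (allOnes n) y → y = allOnes n := by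
    intro y h
    exact ((key y).2).1 (le_antisymm (key y).1 h)
  set C : TLState n → Prop := fun s => s.2 = allOnes n ∧ firstBit s.1 = true with hC
  have hCE : ∀ s, C s → ¬ OptNeg s := by
    rintro s ⟨-, h1⟩ ⟨-, h1'⟩
    rw [h1] at h1'; exact Bool.noConfusion h1'
  have hstepEA : ∀ s t, C s → transEA (n := n) w s t ≠ 0 → C t := by
    rintro s t ⟨h2, h1⟩ hP
    exact closed_step hn mutEA w s t h2 h1 hP
  have hstepRLS : ∀ s t, C s → transRLS (n := n) w s t ≠ 0 → C t := by
    rintro s t ⟨h2, h1⟩ hP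
    exact closed_step hn mutRLS w s t h2 h1 hP
  refine ⟨key, key2, ?_, ?_⟩
  · intro P hP s hs2 hs1 t hPt
    rcases hP with hP | hP
    · subst hP; exact hstepEA s t ⟨hs2, hs1⟩ hPt
    · rw [Set.mem_singleton_iff] at hP
      subst hP; exact hstepRLS s t ⟨hs2, hs1⟩ hPt
  · intro hw
    have hCx : C (x', allOnes n) := ⟨rfl, hx'⟩
    constructor
    · have h0 : ∀ T, hitWithin (transEA (n := n) w) OptNeg T (x', allOnes n) = 0 :=
        fun T => hitWithin_eq_zero _ C OptNeg hstepEA hCE T _ hCx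
      simp [hitProb, h0]
    · have h0 : ∀ T, hitWithin (transRLS (n := n) w) OptNeg T (x', allOnes n) = 0 :=
        fun T => hitWithin_eq_zero _ C OptNeg hstepRLS hCE T _ hCx
      simp [hitProb, h0]
end

section
/- Let n ≥ 1 and let w ∈ ℤ with w > 0. Let x', x ∈ {0,1}^n satisfy x'_1 = 1, x_1 = 0, and |x_{[2..n]}| ≥ n − w + 1. Then for every y ∈ {0,1}^n one has f_w(x,y) < f_w(x',x). Consequently the state (x',x) is absorbing for the time-linkage (1+1) EA on f_w, so started from (x',x) the (1+1) EA never reaches the global optimum. -/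
open scoped Classical BigOperators ENNReal

section Aux

lemma mutEA_eq_prod {n : ℕ} (x y : BitStr n) :
    mutEA x y = ∏ i, (if x i ≠ y i then (1/n : ℝ) else 1 - 1/n) := by
  have h : (Finset.univ.filter fun i : Fin n => x i ≠ y i).card
      + (Finset.univ.filter fun i : Fin n => ¬ (x i ≠ y i)).card = n := by
    have := Finset.card_filter_add_card_filter_not
      (s := (Finset.univ : Finset (Fin n))) (p := fun i : Fin n => x i ≠ y i)
    simpa only [Finset.card_univ, Fintype.card_fin] using this
  have hh : hamming x y = (Finset.univ.filter fun i : Fin n => x i ≠ y i).card := rfl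
  rw [Finset.prod_ite, Finset.prod_const, Finset.prod_const, mutEA]
  congr 2
  omega

lemma sum_mutEA {n : ℕ} (x : BitStr n) : ∑ y : BitStr n, mutEA x y = 1 := by
  have h1 : ∑ y : BitStr n, mutEA x y
      = ∑ y ∈ Fintype.piFinset (fun _ : Fin n => (Finset.univ : Finset Bool)),
        ∏ i, (fun i b => if x i ≠ b then (1/n : ℝ) else 1 - 1/n) i (y i) := by
    rw [Fintype.piFinset_univ]
    exact Finset.sum_congr rfl fun y _ => mutEA_eq_prod x y
  have h3 := Finset.prod_univ_sum (t := fun _ : Fin n => (Finset.univ : Finset Bool))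
    (f := fun (i : Fin n) (b : Bool) => if x i ≠ b then (1/n : ℝ) else 1 - 1/n)
  rw [h1, ← h3]
  have h2 : ∀ i : Fin n, ∑ b : Bool, (if x i ≠ b then (1/n : ℝ) else 1 - 1/n) = 1 := by
    intro i
    rw [Fintype.sum_bool]
    cases h : x i <;> simp [h]
  simp only [h2, Finset.prod_const_one]

end Aux

/-- For `w > 0`, a state `(x', x)` with first bit pattern
`(1, 0)` and `|x_{[2..n]}| ≥ n - w + 1` has strictly better fitness than any
possible offspring, hence it is absorbing for the time-linkage (1+1) EA on
`f_w` and the EA started there never reaches the global optimum. -/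
theorem stmt5 (n : ℕ) (hn : 1 ≤ n) (w : ℤ) (hw : 0 < w)
    (x' x : BitStr n) (hx' : firstBit x' = true) (hx : firstBit x = false)
    (htail : (n : ℤ) - w + 1 ≤ (onesTail x : ℤ)) :
    (∀ y : BitStr n, fW w x y < fW w x' x) ∧
    (∀ t : TLState n, transEA w (x', x) t = if t = (x', x) then 1 else 0) ∧
    hitProb (transEA w) (OptPos (n := n)) (x', x) = 0 := by
  have h0 : 0 < n := hn
  have hx0 : x ⟨0, h0⟩ = false := by simpa [firstBit, h0] using hx
  have hones : ones x = onesTail x := by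
    unfold ones onesTail
    congr 1
    ext i
    simp only [Finset.mem_filter, Finset.mem_univ, true_and]
    constructor
    · intro hi
      refine ⟨hi, fun h0i => ?_⟩
      have : i = ⟨0, h0⟩ := Fin.ext h0i
      rw [this, hx0] at hi
      exact Bool.false_ne_true hi
    · exact fun h => h.1
  have hlt : ∀ y : BitStr n, fW w x y < fW w x' x := by
    intro y
    have hy : ones y ≤ n := by
      have := Finset.card_filter_le (Finset.univ : Finset (Fin n)) (fun i => y i = true)
      simpa [ones] using this
    have hy' : (ones y : ℤ) ≤ n := by exact_mod_cast hy
    have hones' : (ones x : ℤ) = (onesTail x : ℤ) := by exact_mod_cast hones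
    simp only [fW, hx, hx', if_true, if_false, Bool.false_eq_true]
    linarith
  have hnot : ∀ y : BitStr n, ¬ fW w x' x ≤ fW w x y := fun y => not_le.2 (hlt y)
  have htrans : ∀ t : TLState n, transEA w (x', x) t = if t = (x', x) then 1 else 0 := by
    intro t
    show tlTrans mutEA w (x', x) t = _
    rw [tlTrans]
    rw [Finset.sum_eq_zero (fun y _ => by
      rw [if_neg]; rintro ⟨hle, -⟩; exact hnot y hle), zero_add]
    by_cases ht : t = (x', x)
    · rw [if_pos ht, if_pos ht]
      rw [Finset.sum_congr rfl (fun y _ => if_pos (hnot y))]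
      exact sum_mutEA x
    · rw [if_neg ht, if_neg ht]
  have hnotopt : ¬ OptPos (n := n) (x', x) := by
    rintro ⟨h2, -⟩
    rw [show x = allOnes n from h2] at hx0
    simp [allOnes] at hx0
  have hzero : ∀ T, hitWithin (transEA w) (OptPos (n := n)) T (x', x) = 0 := by
    intro T
    induction T with
    | zero => simp [hitWithin, hnotopt]
    | succ T ih =>
      rw [hitWithin, if_neg hnotopt]
      rw [Finset.sum_congr rfl (fun t _ => by rw [htrans t])]
      have : ∀ t : TLState n, (if t = (x', x) then (1:ℝ) else 0) *
          hitWithin (transEA w) (OptPos (n := n)) T t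
          = if t = (x', x) then hitWithin (transEA w) (OptPos (n := n)) T t else 0 := by
        intro t; split <;> simp
      rw [Finset.sum_congr rfl (fun t _ => this t), Finset.sum_ite_eq' Finset.univ (x', x)]
      simp [ih]
  refine ⟨hlt, htrans, ?_⟩
  rw [hitProb]
  have : (fun T => hitWithin (transEA w) (OptPos (n := n)) T (x', x)) = fun _ => (0:ℝ) := by
    funext T; exact hzero T
  rw [show (⨆ T : ℕ, hitWithin (transEA w) (OptPos (n := n)) T (x', x)) = ⨆ _ : ℕ, (0:ℝ)
    from by rw [this]]
  exact ciSup_const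
end

section
/- Let n ≥ 1 and let w ∈ ℤ with w > 1. Let x', x ∈ {0,1}^n satisfy x'_1 = 1 and x_1 = 0. Then for every y ∈ {0,1}^n obtained from x by flipping exactly one bit, one has f_w(x,y) < f_w(x',x). Consequently the state (x',x) is absorbing for the time-linkage RLS on f_w, so started from (x',x) the RLS never reaches the global optimum. -/
open scoped Classical BigOperators ENNReal

lemma ones_le_hamming {n : ℕ} (x y : BitStr n) : ones y ≤ ones x + hamming x y := by
  unfold ones hamming
  refine le_trans (Finset.card_le_card (t := (Finset.univ.filter fun i => x i = true) ∪
    (Finset.univ.filter fun i => x i ≠ y i)) ?_) (Finset.card_union_le _ _)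
  intro i hi
  simp only [Finset.mem_filter, Finset.mem_union, Finset.mem_univ, true_and, ne_eq] at *
  by_cases h : x i = true
  · exact Or.inl h
  · exact Or.inr (by simp [hi, h])

lemma hamming_update {n : ℕ} (x : BitStr n) (i : Fin n) :
    hamming x (Function.update x i (!x i)) = 1 := by
  unfold hamming
  have : (Finset.univ.filter fun j => x j ≠ Function.update x i (!x i) j) = {i} := by
    ext j
    simp only [Finset.mem_filter, Finset.mem_univ, true_and, Finset.mem_singleton, ne_eq]
    by_cases h : j = i
    · subst h; simp [Function.update]
    · simp [Function.update, h]
  rw [this]; simp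

lemma update_inj {n : ℕ} (x : BitStr n) {i j : Fin n}
    (h : Function.update x i (!x i) = Function.update x j (!x j)) : i = j := by
  by_contra hij
  have := congrFun h i
  rw [Function.update_self, Function.update_of_ne hij] at this
  exact (Bool.not_ne_self (x i)) this

lemma hamming_one_exists {n : ℕ} {x y : BitStr n} (h : hamming x y = 1) :
    ∃ i : Fin n, y = Function.update x i (!x i) := by
  unfold hamming at h
  obtain ⟨i, hi⟩ := Finset.card_eq_one.mp h
  refine ⟨i, funext fun j => ?_⟩
  by_cases hj : j = i
  · subst hj
    have : x j ≠ y j := by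
      have hmem : j ∈ (Finset.univ.filter fun k => x k ≠ y k) := by
        rw [hi]; exact Finset.mem_singleton_self j
      simpa using (Finset.mem_filter.mp hmem).2
    have hmem : j ∈ (Finset.univ.filter fun k => x k ≠ y k) := by
      simp [this]
    rw [Function.update_self]
    cases hxj : x j <;> cases hyj : y j <;> simp_all
  · have : j ∉ (Finset.univ.filter fun k => x k ≠ y k) := by
      rw [hi]; simpa using hj
    simp only [Finset.mem_filter, Finset.mem_univ, true_and, ne_eq, not_not] at this
    rw [Function.update_of_ne hj, this]

lemma sum_mutRLS {n : ℕ} (hn : 1 ≤ n) (x : BitStr n) :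
    ∑ y : BitStr n, mutRLS x y = 1 := by
  unfold mutRLS
  rw [Finset.sum_ite, Finset.sum_const_zero, add_zero]
  have hcard : (Finset.univ.filter fun y : BitStr n => hamming x y = 1).card = n := by
    have : (Finset.univ.filter fun y : BitStr n => hamming x y = 1) =
        Finset.image (fun i : Fin n => Function.update x i (!x i)) Finset.univ := by
      ext y
      simp only [Finset.mem_filter, Finset.mem_univ, true_and, Finset.mem_image]
      constructor
      · intro h
        obtain ⟨i, hi⟩ := hamming_one_exists h
        exact ⟨i, hi.symm⟩
      · rintro ⟨i, rfl⟩
        exact hamming_update x i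
    rw [this, Finset.card_image_of_injective _ (fun i j h => update_inj x h)]
    simp
  rw [Finset.sum_const, hcard]
  have hn0 : (n : ℝ) ≠ 0 := by positivity
  rw [nsmul_eq_mul]
  field_simp

/-- For `w > 1`, a state `(x', x)` with first bit pattern
`(1, 0)` has strictly better fitness than any offspring obtained from `x` by
flipping exactly one bit, hence it is absorbing for the time-linkage RLS on
`f_w` and the RLS started there never reaches the global optimum. -/
theorem stmt6 (n : ℕ) (hn : 1 ≤ n) (w : ℤ) (hw : 1 < w)
    (x' x : BitStr n) (hx' : firstBit x' = true) (hx : firstBit x = false) :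
    (∀ y : BitStr n, hamming x y = 1 → fW w x y < fW w x' x) ∧
    (∀ t : TLState n, transRLS w (x', x) t = if t = (x', x) then 1 else 0) ∧
    hitProb (transRLS w) (OptPos (n := n)) (x', x) = 0 := by
  have key : ∀ y : BitStr n, hamming x y = 1 → fW w x y < fW w x' x := by
    intro y hy
    have h1 := ones_le_hamming x y
    rw [hy] at h1
    unfold fW
    rw [hx, hx']
    simp only [if_false, if_true, add_zero, Bool.false_eq_true]
    omega
  have trans : ∀ t : TLState n, transRLS w (x', x) t = if t = (x', x) then 1 else 0 := by
    intro t
    unfold transRLS tlTrans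
    have h1 : (∑ y : BitStr n,
        if fW w (x', x).1 (x', x).2 ≤ fW w (x', x).2 y ∧ t = ((x', x).2, y)
        then mutRLS (x', x).2 y else 0) = 0 := by
      apply Finset.sum_eq_zero
      intro y _
      by_cases hy : hamming x y = 1
      · exact if_neg (fun h => absurd h.1 (not_le.mpr (key y hy)))
      · by_cases hc : fW w (x', x).1 (x', x).2 ≤ fW w (x', x).2 y ∧ t = ((x', x).2, y)
        · rw [if_pos hc]; simp [mutRLS, hy]
        · rw [if_neg hc]
    have h2 : (∑ y : BitStr n,
        if ¬ fW w (x', x).1 (x', x).2 ≤ fW w (x', x).2 y then mutRLS (x', x).2 y else 0) = 1 := by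
      rw [← sum_mutRLS hn x]
      apply Finset.sum_congr rfl
      intro y _
      by_cases hy : hamming x y = 1
      · exact if_pos (not_le.mpr (key y hy))
      · by_cases hc : ¬ fW w (x', x).1 (x', x).2 ≤ fW w (x', x).2 y
        · rw [if_pos hc]
        · rw [if_neg hc]; simp [mutRLS, hy]
    rw [h1, h2, zero_add]
  have hnot : ¬ OptPos (n := n) (x', x) := by
    rintro ⟨h2, -⟩
    have : firstBit x = true := by
      simp only at h2
      rw [h2]
      unfold firstBit allOnes
      have : 0 < n := hn
      simp [this]
    rw [hx] at this
    exact Bool.false_ne_true this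
  have hitzero : ∀ T : ℕ, hitWithin (transRLS w) (OptPos (n := n)) T (x', x) = 0 := by
    intro T
    induction T with
    | zero => simp [hitWithin, hnot]
    | succ T ih =>
      simp only [hitWithin, if_neg hnot]
      rw [Finset.sum_congr rfl (fun t _ => by rw [trans t])]
      rw [Finset.sum_eq_single ((x', x) : TLState n)]
      · simp [ih]
      · intro b _ hb; simp [hb]
      · intro h; exact absurd (Finset.mem_univ _) h
  unfold hitProb
  refine ⟨key, trans, ?_⟩
  simp only [hitzero]
  exact ciSup_const
end
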